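/- For the Poisson structure g^(3), the Hamiltonian H = (1/2)⟨y,y⟩ + ⟨b,x⟩ (with b ∈ ℝ^3 constant) generates the equations of motion ẏ = b∧x, ẋ = y∧x + b∧z, ż = y∧z. That is, the Hamiltonian vector field of H, computed from the Lie–Poisson brackets, assigns to (y,x,z) the vector (b∧x, y∧x + b∧z, y∧z). -/

import Mathlib

open Matrix

noncomputable section

/-- Phase space of `g^(3)`: triples `(y, x, z)` of vectors in `ℝ³`. -/
abbrev G3 := (Fin 3 → ℝ) × (Fin 3 → ℝ) × (Fin 3 → ℝ)

/-- Gradient with respect to `y`. -/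
def gradY (f : G3 → ℝ) (p : G3) : Fin 3 → ℝ :=
  fun a => fderiv ℝ f p (Pi.single a 1, 0, 0)

/-- Gradient with respect to `x`. -/
def gradX (f : G3 → ℝ) (p : G3) : Fin 3 → ℝ :=
  fun a => fderiv ℝ f p (0, Pi.single a 1, 0)

/-- Gradient with respect to `z`. -/
def gradZ (f : G3 → ℝ) (p : G3) : Fin 3 → ℝ :=
  fun a => fderiv ℝ f p (0, 0, Pi.single a 1)

/-- The Lie–Poisson bracket of `g^(3)`: the extension by the Leibniz rule of
`{y^α,y^β} = ε^{αβ}_γ y^γ`, `{y^α,x^β} = ε^{αβ}_γ x^γ`, `{y^α,z^β} = ε^{αβ}_γ z^γ`,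
`{x^α,x^β} = ε^{αβ}_γ z^γ`, `{x^α,z^β} = {z^α,z^β} = 0`, namely
`{f,g} = ⟨y, ∇_y f ∧ ∇_y g⟩ + ⟨x, ∇_y f ∧ ∇_x g + ∇_x f ∧ ∇_y g⟩
       + ⟨z, ∇_y f ∧ ∇_z g + ∇_z f ∧ ∇_y g⟩ + ⟨z, ∇_x f ∧ ∇_x g⟩`. -/
def pb3 (f g : G3 → ℝ) (p : G3) : ℝ :=
  p.1 ⬝ᵥ ((gradY f p) ⨯₃ (gradY g p))
    + p.2.1 ⬝ᵥ ((gradY f p) ⨯₃ (gradX g p) + (gradX f p) ⨯₃ (gradY g p))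
    + p.2.2 ⬝ᵥ ((gradY f p) ⨯₃ (gradZ g p) + (gradZ f p) ⨯₃ (gradY g p))
    + p.2.2 ⬝ᵥ ((gradX f p) ⨯₃ (gradX g p))

def Yc (i : Fin 3) : G3 →L[ℝ] ℝ :=
  (ContinuousLinearMap.proj i).comp (ContinuousLinearMap.fst ℝ _ _)
def Xc (i : Fin 3) : G3 →L[ℝ] ℝ :=
  (ContinuousLinearMap.proj i).comp
    ((ContinuousLinearMap.fst ℝ _ _).comp (ContinuousLinearMap.snd ℝ _ _))
def Zc (i : Fin 3) : G3 →L[ℝ] ℝ :=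
  (ContinuousLinearMap.proj i).comp
    ((ContinuousLinearMap.snd ℝ _ _).comp (ContinuousLinearMap.snd ℝ _ _))


lemma fderiv_Yc (p : G3) (a : Fin 3) : fderiv ℝ (fun q : G3 => q.1 a) p = Yc a :=
  (Yc a).hasFDerivAt.fderiv
lemma fderiv_Xc (p : G3) (a : Fin 3) : fderiv ℝ (fun q : G3 => q.2.1 a) p = Xc a :=
  (Xc a).hasFDerivAt.fderiv
lemma fderiv_Zc (p : G3) (a : Fin 3) : fderiv ℝ (fun q : G3 => q.2.2 a) p = Zc a :=
  (Zc a).hasFDerivAt.fderiv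

lemma hasFDerivAt_H (b : Fin 3 → ℝ) (p : G3) :
    HasFDerivAt (fun q : G3 => (1 / 2) * (q.1 ⬝ᵥ q.1) + b ⬝ᵥ q.2.1)
      ((1/2 : ℝ) • (∑ i, ((p.1 i) • Yc i + (p.1 i) • Yc i)) + ∑ i, (b i) • Xc i) p := by
  have h1 : ∀ i, HasFDerivAt (fun q : G3 => q.1 i) (Yc i) p := fun i => (Yc i).hasFDerivAt
  have h2 : ∀ i, HasFDerivAt (fun q : G3 => q.2.1 i) (Xc i) p := fun i => (Xc i).hasFDerivAt
  have hA : HasFDerivAt (fun q : G3 => q.1 ⬝ᵥ q.1)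
      (∑ i, ((p.1 i) • Yc i + (p.1 i) • Yc i)) p := by
    simp only [dotProduct]
    exact HasFDerivAt.fun_sum fun i _ => by
      simpa [add_comm] using (h1 i).fun_mul (h1 i)
  have hB : HasFDerivAt (fun q : G3 => b ⬝ᵥ q.2.1) (∑ i, (b i) • Xc i) p := by
    simp only [dotProduct]
    exact HasFDerivAt.fun_sum fun i _ => (h2 i).const_mul (b i)
  exact (hA.const_mul (1/2)).add hB

lemma gradY_H (b : Fin 3 → ℝ) (p : G3) :
    gradY (fun q => (1 / 2) * (q.1 ⬝ᵥ q.1) + b ⬝ᵥ q.2.1) p = p.1 := by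
  funext a
  rw [gradY, (hasFDerivAt_H b p).fderiv]
  fin_cases a <;> simp [Yc, Xc, Pi.single_apply, Fin.sum_univ_three] <;> ring

lemma gradX_H (b : Fin 3 → ℝ) (p : G3) :
    gradX (fun q => (1 / 2) * (q.1 ⬝ᵥ q.1) + b ⬝ᵥ q.2.1) p = b := by
  funext a
  rw [gradX, (hasFDerivAt_H b p).fderiv]
  simp [Yc, Xc, Pi.single_apply, Finset.sum_ite_eq']

lemma gradZ_H (b : Fin 3 → ℝ) (p : G3) :
    gradZ (fun q => (1 / 2) * (q.1 ⬝ᵥ q.1) + b ⬝ᵥ q.2.1) p = 0 := by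
  funext a
  rw [gradZ, (hasFDerivAt_H b p).fderiv]
  simp [Yc, Xc]

lemma gradY_y (p : G3) (a : Fin 3) : gradY (fun q => q.1 a) p = Pi.single a 1 := by
  funext c
  rw [gradY, fderiv_Yc p a]
  simp [Yc, Pi.single_apply, eq_comm]

lemma gradX_y (p : G3) (a : Fin 3) : gradX (fun q => q.1 a) p = 0 := by
  funext c; rw [gradX, fderiv_Yc p a]; simp [Yc]

lemma gradZ_y (p : G3) (a : Fin 3) : gradZ (fun q => q.1 a) p = 0 := by
  funext c; rw [gradZ, fderiv_Yc p a]; simp [Yc]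

lemma gradY_x (p : G3) (a : Fin 3) : gradY (fun q => q.2.1 a) p = 0 := by
  funext c; rw [gradY, fderiv_Xc p a]; simp [Xc]

lemma gradX_x (p : G3) (a : Fin 3) : gradX (fun q => q.2.1 a) p = Pi.single a 1 := by
  funext c; rw [gradX, fderiv_Xc p a]; simp [Xc, Pi.single_apply, eq_comm]

lemma gradZ_x (p : G3) (a : Fin 3) : gradZ (fun q => q.2.1 a) p = 0 := by
  funext c; rw [gradZ, fderiv_Xc p a]; simp [Xc]

lemma gradY_z (p : G3) (a : Fin 3) : gradY (fun q => q.2.2 a) p = 0 := by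
  funext c; rw [gradY, fderiv_Zc p a]; simp [Zc]

lemma gradX_z (p : G3) (a : Fin 3) : gradX (fun q => q.2.2 a) p = 0 := by
  funext c; rw [gradX, fderiv_Zc p a]; simp [Zc]

lemma gradZ_z (p : G3) (a : Fin 3) : gradZ (fun q => q.2.2 a) p = Pi.single a 1 := by
  funext c; rw [gradZ, fderiv_Zc p a]; simp [Zc, Pi.single_apply, eq_comm]


/-- The Hamiltonian `H = ½⟨y,y⟩ + ⟨b,x⟩` generates, via the Lie–Poisson bracket of
`g^(3)`, the equations of motion `ẏ = b∧x`, `ẋ = y∧x + b∧z`, `ż = y∧z`: the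
Hamiltonian vector field `f ↦ {f, H}` assigns to `(y,x,z)` the vector
`(b∧x, y∧x + b∧z, y∧z)`. -/
theorem stmt4 (b : Fin 3 → ℝ) (p : G3) (a : Fin 3) :
    pb3 (fun q => q.1 a) (fun q => (1 / 2) * (q.1 ⬝ᵥ q.1) + b ⬝ᵥ q.2.1) p
        = (b ⨯₃ p.2.1) a ∧
    pb3 (fun q => q.2.1 a) (fun q => (1 / 2) * (q.1 ⬝ᵥ q.1) + b ⬝ᵥ q.2.1) p
        = (p.1 ⨯₃ p.2.1 + b ⨯₃ p.2.2) a ∧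
    pb3 (fun q => q.2.2 a) (fun q => (1 / 2) * (q.1 ⬝ᵥ q.1) + b ⬝ᵥ q.2.1) p
        = (p.1 ⨯₃ p.2.2) a := by
  refine ⟨?_, ?_, ?_⟩ <;>
  · rw [pb3, gradY_H, gradX_H, gradZ_H]
    first
    | rw [gradY_y, gradX_y, gradZ_y]
    | rw [gradY_x, gradX_x, gradZ_x]
    | rw [gradY_z, gradX_z, gradZ_z]
    fin_cases a <;>
      simp [cross_apply, dotProduct, Fin.sum_univ_three, Pi.single_apply] <;> ring
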